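/- Let G act 3-discontinuously and 2-cocompactly on a compactum T, with A the fixed discrete G-orbit of entourages. Then for every d > 0, every parabolic point p is the unique accumulation point in T̃ = T ⊔ A of the d-neighborhood N_d(T_{A,k}(p)) of the horosphere T_{A,k}(p). -/

import Mathlib

namespace RHG

/-- Triples with pairwise distinct components. -/
def distinct3 {X : Type*} : Set (X × X × X) :=
  {x | x.1 ≠ x.2.1 ∧ x.1 ≠ x.2.2 ∧ x.2.1 ≠ x.2.2}

/-- Pairs with distinct components. -/
def distinct2 {X : Type*} : Set (X × X) := {x | x.1 ≠ x.2}

/-- The action `act` of `G` on `X` is 3-discontinuous: the induced action on the space of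
(ordered) triples of pairwise distinct points is properly discontinuous. -/
def ThreeDisc {G X : Type*} [TopologicalSpace X] (act : G → X → X) : Prop :=
  ∀ K : Set (X × X × X), IsCompact K → K ⊆ distinct3 →
    Set.Finite {g : G |
      (((fun x : X × X × X => (act g x.1, act g x.2.1, act g x.2.2)) '' K) ∩ K).Nonempty}

/-- The action `act` of `G` on `X` is 2-cocompact: the action on the space of (ordered) pairs
of distinct points is cocompact. -/
def TwoCocompact {G X : Type*} [TopologicalSpace X] (act : G → X → X) : Prop :=
  ∃ K : Set (X × X), IsCompact K ∧ K ⊆ distinct2 ∧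
    ∀ x : X × X, x ∈ (distinct2 : Set (X × X)) → ∃ g : G, (act g x.1, act g x.2) ∈ K

/-- `ρ` is an action of the group `G` on `T` by homeomorphisms. -/
structure IsTopAction (G : Type*) [Group G] (T : Type*) [TopologicalSpace T]
    (ρ : G → T ≃ₜ T) : Prop where
  map_one : ρ 1 = Homeomorph.refl T
  map_mul : ∀ g h : G, ρ (g * h) = (ρ h).trans (ρ g)

/-- The stabilizer of a point for an action by homeomorphisms. -/
def actStab {G : Type*} [Group G] {T : Type*} [TopologicalSpace T]
    (ρ : G → T ≃ₜ T) (hρ : IsTopAction G T ρ) (p : T) : Subgroup G where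
  carrier := {g : G | ρ g p = p}
  one_mem' := by
    simp only [Set.mem_setOf_eq, hρ.map_one, Homeomorph.refl_apply, id_eq]
  mul_mem' := by
    intro a b ha hb
    simp only [Set.mem_setOf_eq] at *
    rw [hρ.map_mul, Homeomorph.trans_apply, hb, ha]
  inv_mem' := by
    intro a ha
    simp only [Set.mem_setOf_eq] at *
    have h1 : ρ (a⁻¹ * a) p = ρ a⁻¹ (ρ a p) := by
      rw [hρ.map_mul, Homeomorph.trans_apply]
    rw [inv_mul_cancel, hρ.map_one, ha] at h1
    simpa using h1.symm

/-- A parabolic point: its stabilizer is infinite and it is the unique fixed point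
of its stabilizer. -/
def IsParabolicPt {G : Type*} [Group G] {T : Type*} [TopologicalSpace T]
    (ρ : G → T ≃ₜ T) (hρ : IsTopAction G T ρ) (p : T) : Prop :=
  Set.Infinite ((actStab ρ hρ p : Set G)) ∧
    ∀ q : T, (∀ g ∈ actStab ρ hρ p, ρ g q = q) → q = p

/-- `T` contains at least three points. -/
def HasThreePts (T : Type*) : Prop := ∃ x y z : T, x ≠ y ∧ x ≠ z ∧ y ≠ z

end RHG

namespace RHG

/-- An entourage of a topological space `T`: a symmetric neighborhood of the diagonal
in `T × T` (identified with a neighborhood of the diagonal in the symmetric square). -/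
structure Entourage (T : Type*) [TopologicalSpace T] where
  carrier : Set (T × T)
  symm' : ∀ x y : T, (x, y) ∈ carrier → (y, x) ∈ carrier
  mem_nhds' : ∀ x : T, carrier ∈ nhds (x, x)

variable {T : Type*} [TopologicalSpace T]

/-- A set is `e`-small if its `Δ_e`-diameter is at most 1, i.e. any two of its points
form a pair belonging to `e`. -/
def eSmall (e : Entourage T) (s : Set T) : Prop :=
  ∀ x ∈ s, ∀ y ∈ s, (x, y) ∈ e.carrier

/-- `Δ_e (x, y) ≤ k` for the maximal metric `Δ_e` with `Δ_e ≤ 1` on pairs of `e`: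
there is a chain of length `k` from `x` to `y` with consecutive pairs in `e`. -/
def eDistLE (e : Entourage T) (k : ℕ) (x y : T) : Prop :=
  ∃ c : ℕ → T, c 0 = x ∧ c k = y ∧ ∀ i < k, (c i, c (i + 1)) ∈ e.carrier

/-- Two entourages are unlinked if `T` is the union of an `a`-small and a `b`-small set. -/
def EntUnlinked (a b : Entourage T) : Prop :=
  ∃ sa sb : Set T, eSmall a sa ∧ eSmall b sb ∧ sa ∪ sb = Set.univ

/-- Two entourages are linked if they are not unlinked. -/
def EntLinked (a b : Entourage T) : Prop := ¬ EntUnlinked a b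

/-- Standing convention on entourages: self-linked, and `Δ_e`-diameter of `T` greater
than `4`. -/
def GoodEnt (e : Entourage T) : Prop :=
  EntLinked e e ∧ ∃ x y : T, ¬ eDistLE e 4 x y

/-- The shadow `sh_a b`: the intersection of all `a`-small sets with `b`-small complement. -/
def shadow (a b : Entourage T) : Set T :=
  ⋂₀ {s : Set T | eSmall a s ∧ eSmall b sᶜ}

/-- The betweenness relation `a − b − c (k)`:
`a ⋈ b ⋈ c` and `Δ_b(sh_b a, sh_b c) > k`. -/
def Btw (a b c : Entourage T) (k : ℕ) : Prop :=
  EntUnlinked a b ∧ EntUnlinked b c ∧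
    ∀ x ∈ shadow b a, ∀ y ∈ shadow b c, ¬ eDistLE b k x y

/-- The betweenness relation `a − b − p (k)` for a point `p ∈ T`:
`a ⋈ b` and `Δ_b(sh_b a, b₀) > k` for every `b`-small neighborhood `b₀` of `p`. -/
def BtwP (a b : Entourage T) (p : T) (k : ℕ) : Prop :=
  EntUnlinked a b ∧
    ∀ s : Set T, eSmall b s → s ∈ nhds p → ∀ x ∈ shadow b a, ∀ y ∈ s, ¬ eDistLE b k x y

/-- The betweenness relation `p − b − q (k)` for points `p, q ∈ T`:
`Δ_b(b₁, b₂) > k` for all `b`-small neighborhoods `b₁` of `p` and `b₂` of `q`. -/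
def BtwPP (p : T) (b : Entourage T) (q : T) (k : ℕ) : Prop :=
  ∀ s₁ s₂ : Set T, eSmall b s₁ → s₁ ∈ nhds p → eSmall b s₂ → s₂ ∈ nhds q →
    ∀ x ∈ s₁, ∀ y ∈ s₂, ¬ eDistLE b k x y

/-- The image of an entourage under a homeomorphism of `T`. -/
def entMap (φ : T ≃ₜ T) (e : Entourage T) : Entourage T where
  carrier := (fun x : T × T => ((φ.symm x.1 : T), (φ.symm x.2 : T))) ⁻¹' e.carrier
  symm' := fun x y h => e.symm' _ _ h
  mem_nhds' := fun x => by
    have hcont : Continuous fun x : T × T => ((φ.symm x.1 : T), (φ.symm x.2 : T)) :=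
      (φ.symm.continuous.comp continuous_fst).prodMk (φ.symm.continuous.comp continuous_snd)
    exact hcont.continuousAt.preimage_mem_nhds (e.mem_nhds' (φ.symm x))

/-- The orbit of an entourage under an action of `G` on `T` by homeomorphisms. -/
def entOrbit {G : Type*} [Group G] (ρ : G → T ≃ₜ T) (a₀ : Entourage T) :
    Set (Entourage T) :=
  {e | ∃ g : G, e = entMap (ρ g) a₀}

/-- A set of entourages is discrete if every entourage is linked with only finitely many
of its elements. -/
def DiscreteEnts (A : Set (Entourage T)) : Prop :=
  ∀ w : Entourage T, Set.Finite {a ∈ A | EntLinked a w}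

/-- `d_A(a, b) ≤ n` in the graph of entourages: there is a walk of length `n` in `A`
from `a` to `b` with consecutive vertices linked. -/
def AdistLE (A : Set (Entourage T)) (n : ℕ) (a b : Entourage T) : Prop :=
  ∃ c : ℕ → Entourage T, c 0 = a ∧ c n = b ∧ (∀ i ≤ n, c i ∈ A) ∧
    ∀ i < n, EntLinked (c i) (c (i + 1))

/-- The `d`-neighborhood of a subset `S` inside the graph of entourages on `A`. -/
def Anbhd (A : Set (Entourage T)) (d : ℕ) (S : Set (Entourage T)) : Set (Entourage T) :=
  {a ∈ A | ∃ b ∈ S, AdistLE A d a b}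

/-- The horosphere `T_{A,k}(p)`: the entourages of `A` which are not separated
from `p` by any element of `A`. -/
def horosphere (A : Set (Entourage T)) (k : ℕ) (p : T) : Set (Entourage T) :=
  {e ∈ A | ¬ ∃ a ∈ A, BtwP e a p k}

/-- `Ψ_k(a,b) = {c ∈ A : a − c − b (k)}`. -/
def Psi (A : Set (Entourage T)) (k : ℕ) (a b : Entourage T) : Set (Entourage T) :=
  {c ∈ A | Btw a c b k}

/-- The topology on `T̃ = T ⊔ A`, generated by the singletons of elements of `A` and
the convex hulls `õ = o ∪ {e ∈ A : oᶜ is e-small}` of open sets `o ⊆ T`. -/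
def tildeTop (A : Set (Entourage T)) : TopologicalSpace (T ⊕ ↥A) :=
  TopologicalSpace.generateFrom
    ({s | ∃ e : ↥A, s = {Sum.inr e}} ∪
      {s | ∃ o : Set T, IsOpen o ∧
        s = Sum.inl '' o ∪ Sum.inr '' {e : ↥A | eSmall (↑e) oᶜ}})

/-- The set of accumulation points of a set `S` in a topological space. -/
def accPts {X : Type*} [TopologicalSpace X] (S : Set X) : Set X :=
  {x | x ∈ closure (S \ {x})}

/-- The extension of the action of `G` on `T` to `T̃ = T ⊔ A`. -/
def tildeAct {G : Type*} [Group G] (ρ : G → T ≃ₜ T) (A : Set (Entourage T))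
    (hinv : ∀ g : G, ∀ a ∈ A, entMap (ρ g) a ∈ A) (g : G) :
    T ⊕ ↥A → T ⊕ ↥A :=
  fun x => match x with
  | Sum.inl t => Sum.inl (ρ g t)
  | Sum.inr e => Sum.inr ⟨entMap (ρ g) ↑e, hinv g (↑e) e.2⟩

/-- The `m`-separation property for a set of entourages. -/
def Separates (A : Set (Entourage T)) (m : ℕ) : Prop :=
  ∀ p q : T, p ≠ q → ∃ a ∈ A, BtwPP p a q m

/-- `A` generates the filter of entourages. -/
def GeneratesFilter (A : Set (Entourage T)) : Prop :=
  ∀ u : Entourage T, ∃ (n : ℕ) (f : Fin n → Entourage T),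
    (∀ i, f i ∈ A) ∧ (⋂ i, (f i).carrier) ⊆ u.carrier

/-- `γ` restricted to the integer interval `[i, j]` is a `c`-quasigeodesic of the graph
of entourages on `A`. -/
def IsQGOn (A : Set (Entourage T)) (c : ℝ) (i j : ℕ) (γ : ℕ → Entourage T) : Prop :=
  ∀ s t : ℕ, i ≤ s → s ≤ j → i ≤ t → t ≤ j →
    (∀ m : ℕ, AdistLE A m (γ s) (γ t) → (1 / c) * |(s : ℝ) - (t : ℝ)| - c < (m : ℝ)) ∧
    ∃ m : ℕ, AdistLE A m (γ s) (γ t) ∧ (m : ℝ) ≤ c * |(s : ℝ) - (t : ℝ)| + c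

/-- `γ : [0, n] → A` is a `c`-quasigeodesic of the graph of entourages on `A`. -/
def IsQG (A : Set (Entourage T)) (c : ℝ) (n : ℕ) (γ : ℕ → Entourage T) : Prop :=
  (∀ i ≤ n, γ i ∈ A) ∧ IsQGOn A c 0 n γ

/-- `γ : [0, n] → A` is a curve (edge-path) in the graph of entourages on `A`. -/
def IsCurve (A : Set (Entourage T)) (n : ℕ) (γ : ℕ → Entourage T) : Prop :=
  (∀ i ≤ n, γ i ∈ A) ∧ ∀ i < n, EntLinked (γ i) (γ (i + 1))

/-- `γ : [0, n] → A` is an `(l, c)`-tight curve (with horosphere parameter `k` and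
neighborhood radius `r`): every subinterval of length at most `l` is a `c`-quasigeodesic,
and if more than `l` points of the image of a subinterval lie in the `r`-neighborhood of
a horosphere of a parabolic point, then the endpoints of the subinterval are at
`d_A`-distance greater than `l/c − c`. -/
def IsTight (A : Set (Entourage T)) (k l : ℕ) (c : ℝ) (r n : ℕ)
    (γ : ℕ → Entourage T) : Prop :=
  IsCurve A n γ ∧
  (∀ i j : ℕ, i ≤ j → j ≤ n → j - i ≤ l → IsQGOn A c i j γ) ∧
  (∀ i j : ℕ, i ≤ j → j ≤ n → ∀ p : T, (horosphere A k p).Infinite →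
    l < Set.ncard ((γ '' Set.Icc i j) ∩ Anbhd A r (horosphere A k p)) →
    ∀ m : ℕ, AdistLE A m (γ i) (γ j) → (l : ℝ) / c - c < (m : ℝ))

/-- The vertex `γ i` of the curve `γ` is `d`-horospherical (with constant `e`): `γ`
contains subsegments `[i₁, i]` and `[i, i₂]` of length greater than `e` lying in the
`d`-neighborhood of the horosphere of a parabolic point. -/
def IsHoroVertex (A : Set (Entourage T)) (k d e n : ℕ) (γ : ℕ → Entourage T)
    (i : ℕ) : Prop :=
  ∃ (p : T) (i₁ i₂ : ℕ), (horosphere A k p).Infinite ∧ i₁ ≤ i ∧ i ≤ i₂ ∧ i₂ ≤ n ∧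
    e < i - i₁ ∧ e < i₂ - i ∧
    ∀ m : ℕ, i₁ ≤ m → m ≤ i₂ → γ m ∈ Anbhd A d (horosphere A k p)

end RHG

namespace RHG

section Aux
open Set Filter Topology Uniformity

variable {T : Type*} [TopologicalSpace T]

lemma Entourage.mem_diag (e : Entourage T) (x : T) : (x, x) ∈ e.carrier :=
  mem_of_mem_nhds (e.mem_nhds' x)

lemma ball_mem_nhds'' {W : Set (T × T)} {x : T} (h : W ∈ 𝓝 (x, x)) :
    {y | (x, y) ∈ W} ∈ 𝓝 x := by
  obtain ⟨u, hu, v, hv, huv⟩ := mem_nhds_prod_iff.mp h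
  refine Filter.mem_of_superset hv fun y hy => ?_
  exact huv ⟨mem_of_mem_nhds hu, hy⟩

lemma exists_symm_comp4 [CompactSpace T] [T2Space T] (s : Set (T × T))
    (hs : ∀ x : T, s ∈ 𝓝 (x, x)) :
    ∃ W : Set (T × T), (∀ x : T, W ∈ 𝓝 (x, x)) ∧ (∀ a b : T, (a, b) ∈ W → (b, a) ∈ W) ∧
      ∀ a b c d e : T, (a, b) ∈ W → (b, c) ∈ W → (c, d) ∈ W → (d, e) ∈ W → (a, e) ∈ s := by
  letI U : UniformSpace T := uniformSpaceOfCompactR1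
  have hs' : s ∈ 𝓤 T := by
    rw [← nhdsSet_diagonal_eq_uniformity]
    rw [mem_nhdsSet_iff_forall]
    rintro ⟨x, y⟩ (rfl : x = y)
    exact hs x
  obtain ⟨V, hV, hVsymm, hVV⟩ := comp_symm_mem_uniformity_sets hs'
  obtain ⟨W, hW, hWsymm, hWW⟩ := comp_symm_mem_uniformity_sets hV
  refine ⟨W, ?_, ?_, ?_⟩
  · intro x
    exact mem_nhdsSet_iff_forall.mp (by rw [nhdsSet_diagonal_eq_uniformity]; exact hW : W ∈ 𝓝ˢ (diagonal T)) (x, x) rfl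
  · intro a b h; exact hWsymm.symm a b h
  · intro a b c d e h1 h2 h3 h4
    exact hVV ⟨c, hWW ⟨b, h1, h2⟩, hWW ⟨d, h3, h4⟩⟩

lemma eSmall_mono {e : Entourage T} {s t : Set T} (h : eSmall e t) (hst : s ⊆ t) :
    eSmall e s := fun x hx y hy => h x (hst hx) y (hst hy)

lemma eDistLE_mono {e : Entourage T} {k l : ℕ} (hkl : k ≤ l) {x y : T}
    (h : eDistLE e k x y) : eDistLE e l x y := by
  obtain ⟨c, h0, hk, hc⟩ := h
  refine ⟨fun i => c (min i k), by simpa using h0, by simp [Nat.min_eq_right hkl, hk], ?_⟩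
  intro i hi
  show (c (min i k), c (min (i + 1) k)) ∈ e.carrier
  rcases lt_or_ge i k with h' | h'
  · rw [min_eq_left h'.le, min_eq_left h']
    exact hc i h'
  · rw [min_eq_right h', min_eq_right (le_trans h' (Nat.le_succ i)), hk]
    exact e.mem_diag y

lemma exists_pair_notin {e : Entourage T} (he : EntLinked e e) (q : T) :
    ∃ x y : T, x ≠ q ∧ y ≠ q ∧ (x, y) ∉ e.carrier := by
  by_contra h
  push_neg at h
  obtain ⟨u, hu, v, hv, huv⟩ := mem_nhds_prod_iff.mp (e.mem_nhds' q)
  apply he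
  refine ⟨u ∩ v, {q}ᶜ, ?_, ?_, ?_⟩
  · intro x hx y hy
    exact huv ⟨hx.1, hy.2⟩
  · intro x hx y hy
    exact h x y (by simpa using hx) (by simpa using hy)
  · ext z
    simp only [mem_union, mem_inter_iff, mem_compl_iff, mem_singleton_iff, mem_univ, iff_true]
    by_cases hz : z = q
    · subst hz
      exact Or.inl ⟨mem_of_mem_nhds hu, mem_of_mem_nhds hv⟩
    · exact Or.inr hz

lemma horo_finite_base [CompactSpace T] [T2Space T] {A : Set (Entourage T)}
    (hdisc : DiscreteEnts A) {m : ℕ} (hsep : Separates A m) {k : ℕ} (hkm : k ≤ m)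
    {p : T} {o : Set T} (ho : IsOpen o) (hpo : p ∈ o) :
    {e ∈ horosphere A k p | ¬ eSmall e oᶜ}.Finite := by
  classical
  have hsepc : ∀ x : T, ∃ a : Entourage T, x ∈ oᶜ → a ∈ A ∧ BtwPP x a p m := by
    intro x
    by_cases hx : x ∈ oᶜ
    · obtain ⟨a, h1, h2⟩ := hsep x p (fun h => hx (h ▸ hpo))
      exact ⟨a, fun _ => ⟨h1, h2⟩⟩
    · exact ⟨⟨Set.univ, fun _ _ _ => trivial, fun _ => Filter.univ_mem⟩, fun h => absurd h hx⟩
  choose a ha using hsepc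
  have hWex : ∀ x : T, ∃ W : Set (T × T), (∀ z : T, W ∈ 𝓝 (z, z)) ∧
      (∀ y z : T, (y, z) ∈ W → (z, y) ∈ W) ∧
      ∀ y z u v w' : T, (y, z) ∈ W → (z, u) ∈ W → (u, v) ∈ W → (v, w') ∈ W →
        (y, w') ∈ (a x).carrier := fun x =>
    exists_symm_comp4 _ (fun z => (a x).mem_nhds' z)
  choose W hW1 hW2 hW3 using hWex
  have hKc : IsCompact oᶜ := ho.isClosed_compl.isCompact
  obtain ⟨F, hFK, hFcov⟩ := hKc.elim_nhds_subcover (fun x => {y | (x, y) ∈ W x})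
    (fun x _ => ball_mem_nhds'' (hW1 x x))
  set U : Set (T × T) := ⋂ x ∈ F, W x with hU
  have hUmem : ∀ z : T, U ∈ 𝓝 (z, z) := fun z =>
    (Filter.biInter_finset_mem F).2 fun x _ => hW1 x z
  obtain ⟨w, hwcar⟩ : ∃ w : Entourage T, w.carrier = o ×ˢ o ∪ U := by
    refine ⟨⟨o ×ˢ o ∪ U, ?_, ?_⟩, rfl⟩
    · rintro x y (⟨hx, hy⟩ | h)
      · exact Or.inl ⟨hy, hx⟩
      · refine Or.inr ?_
        rw [mem_iInter₂] at h ⊢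
        intro i hi
        exact hW2 i x y (h i hi)
    · intro z
      by_cases hz : z ∈ o
      · exact Filter.mem_of_superset ((ho.prod ho).mem_nhds ⟨hz, hz⟩) subset_union_left
      · exact Filter.mem_of_superset (hUmem z) subset_union_right
  have key : ∀ e : Entourage T, e ∈ horosphere A k p → ¬ eSmall e oᶜ → EntLinked e w := by
    intro e heH hbad hunl
    obtain ⟨s, t, hs, ht, hst⟩ := hunl
    obtain ⟨u, huo, hus⟩ : ∃ u ∈ oᶜ, u ∉ s := by
      rw [eSmall] at hbad
      push_neg at hbad
      obtain ⟨x, hx, y, hy, hxy⟩ := hbad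
      by_cases hxs : x ∈ s
      · exact ⟨y, hy, fun hys => hxy (hs x hxs y hys)⟩
      · exact ⟨x, hx, hxs⟩
    have hut : u ∈ t := by
      have huniv : u ∈ s ∪ t := hst ▸ mem_univ u
      exact huniv.resolve_left hus
    obtain ⟨x₀, hx₀F, hux₀⟩ : ∃ x₀ ∈ F, (x₀, u) ∈ W x₀ := by
      have := hFcov huo
      simpa using this
    have hx₀K : x₀ ∈ oᶜ := hFK x₀ hx₀F
    set s₁ : Set T := {y | ∃ z, (x₀, z) ∈ W x₀ ∧ (z, y) ∈ W x₀} with hs₁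
    have hts₁ : t ⊆ s₁ := by
      intro y hy
      have hpair : (u, y) ∈ w.carrier := ht u hut y hy
      rw [hwcar] at hpair
      rcases hpair with ⟨h1, _⟩ | h1
      · exact absurd h1 huo
      · refine ⟨u, hux₀, ?_⟩
        rw [mem_iInter₂] at h1
        exact h1 x₀ hx₀F
    have hs₁small : eSmall (a x₀) s₁ := by
      rintro y ⟨z, hz1, hz2⟩ y' ⟨z', hz1', hz2'⟩
      exact hW3 x₀ y z x₀ z' y' (hW2 x₀ _ _ hz2) (hW2 x₀ _ _ hz1) hz1' hz2'
    have hs₁nhds : s₁ ∈ 𝓝 x₀ := by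
      refine Filter.mem_of_superset (ball_mem_nhds'' (hW1 x₀ x₀)) ?_
      intro y hy
      exact ⟨x₀, mem_of_mem_nhds (hW1 x₀ x₀), hy⟩
    have htsmall : eSmall (a x₀) t := eSmall_mono hs₁small hts₁
    refine heH.2 ⟨a x₀, (ha x₀ hx₀K).1, ⟨s, t, hs, htsmall, hst⟩, ?_⟩
    intro s₂ hs₂small hs₂nhds x hx y hy hdist
    have hxt : x ∈ t := by
      have ht' : t ∈ {s' : Set T | eSmall (a x₀) s' ∧ eSmall e s'ᶜ} := by
        refine ⟨htsmall, ?_⟩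
        intro x' hx' y' hy'
        have hx's : x' ∈ s := (hst ▸ mem_univ x' : x' ∈ s ∪ t).resolve_right hx'
        have hy's : y' ∈ s := (hst ▸ mem_univ y' : y' ∈ s ∪ t).resolve_right hy'
        exact hs x' hx's y' hy's
      exact (sInter_subset_of_mem ht') hx
    exact (ha x₀ hx₀K).2 s₁ s₂ hs₁small hs₁nhds hs₂small hs₂nhds x (hts₁ hxt) y hy
      (eDistLE_mono hkm hdist)
  have hsub : {e ∈ horosphere A k p | ¬ eSmall e oᶜ} ⊆ {b ∈ A | EntLinked b w} :=
    fun e he => ⟨he.1.1, key e he.1 he.2⟩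
  exact (hdisc w).subset hsub

lemma horo_finite_step [CompactSpace T] [T2Space T] {A B : Set (Entourage T)}
    (hdisc : DiscreteEnts A) {p : T}
    (hB : ∀ o : Set T, IsOpen o → p ∈ o → {e ∈ B | ¬ eSmall e oᶜ}.Finite)
    {o : Set T} (ho : IsOpen o) (hpo : p ∈ o) :
    {e ∈ A | (∃ e' ∈ B, EntLinked e e') ∧ ¬ eSmall e oᶜ}.Finite := by
  classical
  obtain ⟨t', ht'n, ht'c, ht'o⟩ := exists_mem_nhds_isClosed_subset (ho.mem_nhds hpo)
  set o₁ := interior t' with ho₁def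
  have hpo₁ : p ∈ o₁ := mem_interior_iff_mem_nhds.2 ht'n
  have hco₁ : closure o₁ ⊆ o := by
    have h1 : closure o₁ ⊆ closure t' := closure_mono interior_subset
    rw [ht'c.closure_eq] at h1
    exact h1.trans ht'o
  have hB₀ : {e ∈ B | ¬ eSmall e o₁ᶜ}.Finite := hB o₁ isOpen_interior hpo₁
  obtain ⟨w, hwcar⟩ : ∃ w : Entourage T,
      w.carrier = o ×ˢ o ∪ (closure o₁)ᶜ ×ˢ (closure o₁)ᶜ := by
    refine ⟨⟨_, ?_, ?_⟩, rfl⟩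
    · rintro x y (⟨hx, hy⟩ | ⟨hx, hy⟩)
      · exact Or.inl ⟨hy, hx⟩
      · exact Or.inr ⟨hy, hx⟩
    · intro z
      by_cases hz : z ∈ o
      · exact Filter.mem_of_superset ((ho.prod ho).mem_nhds ⟨hz, hz⟩) subset_union_left
      · have hz' : z ∈ (closure o₁)ᶜ := fun hc => hz (hco₁ hc)
        exact Filter.mem_of_superset
          ((isClosed_closure.isOpen_compl.prod isClosed_closure.isOpen_compl).mem_nhds
            ⟨hz', hz'⟩) subset_union_right
  have hsub : {e ∈ A | (∃ e' ∈ B, EntLinked e e') ∧ ¬ eSmall e oᶜ} ⊆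
      {b ∈ A | EntLinked b w} ∪ ⋃ e' ∈ {e ∈ B | ¬ eSmall e o₁ᶜ}, {b ∈ A | EntLinked b e'} := by
    rintro e ⟨heA, ⟨e', he'B, hlink⟩, hbad⟩
    by_cases hsmall : eSmall e' o₁ᶜ
    · left
      refine ⟨heA, fun hunl => ?_⟩
      obtain ⟨s, t, hs, ht, hst⟩ := hunl
      have hsc : ¬ eSmall e' sᶜ := fun h => hlink ⟨s, sᶜ, hs, h, union_compl_self s⟩
      rw [eSmall] at hsc
      push_neg at hsc
      obtain ⟨x, hx, y, hy, hxy⟩ := hsc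
      obtain ⟨u, hu₁, hus⟩ : ∃ u, u ∈ o₁ ∧ u ∉ s := by
        by_cases hxo : x ∈ o₁
        · exact ⟨x, hxo, hx⟩
        · by_cases hyo : y ∈ o₁
          · exact ⟨y, hyo, hy⟩
          · exact absurd (hsmall x hxo y hyo) hxy
      have hut : u ∈ t := (hst ▸ mem_univ u : u ∈ s ∪ t).resolve_left hus
      have hto : t ⊆ o := by
        intro z hz
        have hz' := ht u hut z hz
        rw [hwcar] at hz'
        rcases hz' with ⟨_, h2⟩ | ⟨h1, _⟩
        · exact h2
        · exact absurd (subset_closure hu₁) h1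
      refine hbad fun x' hx' y' hy' => ?_
      have hx's : x' ∈ s := (hst ▸ mem_univ x' : x' ∈ s ∪ t).resolve_right fun h => hx' (hto h)
      have hy's : y' ∈ s := (hst ▸ mem_univ y' : y' ∈ s ∪ t).resolve_right fun h => hy' (hto h)
      exact hs x' hx's y' hy's
    · right
      exact mem_biUnion ⟨he'B, hsmall⟩ ⟨heA, hlink⟩
  exact ((hdisc w).union (hB₀.biUnion fun e' _ => hdisc e')).subset hsub

lemma horo_finite_nbhd [CompactSpace T] [T2Space T] {A : Set (Entourage T)}
    (hdisc : DiscreteEnts A) {m : ℕ} (hsep : Separates A m) {k : ℕ} (hkm : k ≤ m)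
    {p : T} (r : ℕ) :
    ∀ o : Set T, IsOpen o → p ∈ o →
      {e ∈ Anbhd A r (horosphere A k p) | ¬ eSmall e oᶜ}.Finite := by
  induction r with
  | zero =>
    intro o ho hpo
    refine (horo_finite_base hdisc hsep hkm ho hpo).subset ?_
    rintro e ⟨⟨heA, b, hbH, c, hc0, hcr, -, -⟩, hbad⟩
    have heb : e = b := hc0.symm.trans hcr
    exact ⟨heb ▸ hbH, hbad⟩
  | succ r ih =>
    intro o ho hpo
    refine (horo_finite_step hdisc (fun o' ho' hpo' => ih o' ho' hpo') ho hpo).subset ?_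
    rintro e ⟨⟨heA, b, hbH, c, hc0, hcr, hcA, hclink⟩, hbad⟩
    refine ⟨heA, ⟨c 1, ⟨hcA 1 (Nat.succ_le_succ (Nat.zero_le r)), b, hbH, fun i => c (i + 1),
      rfl, hcr, fun i hi => hcA (i + 1) (Nat.succ_le_succ hi),
      fun i hi => hclink (i + 1) (Nat.succ_lt_succ hi)⟩, hc0 ▸ hclink 0 (Nat.succ_pos r)⟩, hbad⟩

end Aux


/-- Let `G` act 3-discontinuously and 2-cocompactly on a compactum `T`, with `A` the fixed
discrete `G`-orbit of entourages (satisfying the separation and generation conventions).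
Then for every `d > 0`, a parabolic point `p` is the unique accumulation point in
`T̃ = T ⊔ A` of the `d`-neighborhood of the horosphere `T_{A,k}(p)`. -/
theorem parabolic_unique_accumulation_point {G : Type*} [Group G]
    {T : Type*} [TopologicalSpace T] [CompactSpace T] [T2Space T] (h3 : HasThreePts T)
    (ρ : G → T ≃ₜ T) (hρ : IsTopAction G T ρ)
    (h3d : ThreeDisc fun (g : G) (x : T) => ρ g x)
    (h2c : TwoCocompact fun (g : G) (x : T) => ρ g x)
    (a₀ : Entourage T) (A : Set (Entourage T)) (hA : A = entOrbit ρ a₀)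
    (hgood : ∀ a ∈ A, GoodEnt a) (hdisc : DiscreteEnts A)
    (m : ℕ) (hsep : Separates A m) (hgen : GeneratesFilter A)
    (k : ℕ) (hk3 : 3 < k) (hkm : k ≤ m)
    (p : T) (hp : (horosphere A k p).Infinite) :
    ∀ d : ℕ, 0 < d →
      @accPts _ (tildeTop A)
          (Sum.inr '' {e : ↥A | (e : Entourage T) ∈ Anbhd A d (horosphere A k p)}) =
        {Sum.inl p} := by
  classical
  intro d hd
  letI ts : TopologicalSpace (T ⊕ ↥A) := tildeTop A
  have hfin : ∀ o : Set T, IsOpen o → p ∈ o →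
      {e ∈ Anbhd A d (horosphere A k p) | ¬ eSmall e oᶜ}.Finite :=
    horo_finite_nbhd hdisc hsep hkm d
  set Nd := Anbhd A d (horosphere A k p) with hNddef
  have hNdA : Nd ⊆ A := fun e he => he.1
  have hHsub : horosphere A k p ⊆ Nd := by
    intro e he
    exact ⟨he.1, e, he, fun _ => e, rfl, rfl, fun i _ => he.1, fun i _ => (hgood e he.1).1⟩
  have hNdInf : Nd.Infinite := hp.mono hHsub
  set S : Set (T ⊕ ↥A) := Sum.inr '' {e : ↥A | (e : Entourage T) ∈ Nd} with hSdef
  have hSinf : S.Infinite := by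
    have h1 : {e : ↥A | (e : Entourage T) ∈ Nd}.Infinite := by
      intro hfin'
      apply hNdInf
      have himg : Nd = Subtype.val '' {e : ↥A | (e : Entourage T) ∈ Nd} := by
        ext e
        constructor
        · intro he
          exact ⟨⟨e, hNdA he⟩, he, rfl⟩
        · rintro ⟨e', he', rfl⟩
          exact he'
      rw [himg]
      exact hfin'.image _
    exact Set.Infinite.image (fun x _ y _ h => Sum.inr_injective h) h1
  have hSnr : ∀ z ∈ S, ∃ e : ↥A, z = Sum.inr e ∧ (e : Entourage T) ∈ Nd := by
    rintro z ⟨e, he, rfl⟩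
    exact ⟨e, rfl, he⟩
  have hSdiffl : ∀ q : T, S \ {Sum.inl q} = S := by
    intro q
    refine Set.diff_singleton_eq_self ?_
    rintro ⟨e, -, h⟩
    exact Sum.inr_ne_inl h
  have hopenfin : ∀ U : Set (T ⊕ ↥A), IsOpen U → (S \ U).Finite ∨ Sum.inl p ∉ U := by
    intro U hU
    have hU' : TopologicalSpace.GenerateOpen
        ({s | ∃ e : ↥A, s = {Sum.inr e}} ∪
          {s | ∃ o : Set T, IsOpen o ∧
            s = Sum.inl '' o ∪ Sum.inr '' {e : ↥A | eSmall (↑e) oᶜ}}) U := hU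
    clear hU
    induction hU' with
    | basic s hs =>
      rcases hs with ⟨e, rfl⟩ | ⟨o, ho, rfl⟩
      · right
        simp
      · by_cases hpo : p ∈ o
        · left
          have hsub : S \ (Sum.inl '' o ∪ Sum.inr '' {e : ↥A | eSmall (↑e) oᶜ}) ⊆
              Sum.inr '' (Subtype.val ⁻¹' {e | e ∈ Nd ∧ ¬ eSmall e oᶜ}) := by
            rintro z ⟨⟨e, he, rfl⟩, hz2⟩
            exact ⟨e, ⟨he, fun hsm => hz2 (Or.inr ⟨e, hsm, rfl⟩)⟩, rfl⟩
          exact (((hfin o ho hpo).preimage Subtype.coe_injective.injOn).image _).subset hsub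
        · right
          intro hmem
          rcases hmem with ⟨x, hx, hxeq⟩ | ⟨e, -, heq⟩
          · rw [Sum.inl.injEq] at hxeq
            exact hpo (hxeq ▸ hx)
          · exact Sum.inr_ne_inl heq
    | univ =>
      left
      simpa using Set.finite_empty
    | inter s t hs ht ihs iht =>
      rcases ihs with h1 | h1
      · rcases iht with h2 | h2
        · left
          refine (h1.union h2).subset ?_
          rintro z ⟨hzS, hz⟩
          by_cases hzs : z ∈ s
          · exact Or.inr ⟨hzS, fun hzt => hz ⟨hzs, hzt⟩⟩
          · exact Or.inl ⟨hzS, hzs⟩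
        · right
          exact fun h => h2 h.2
      · right
        exact fun h => h1 h.1
    | sUnion σ hσ ih =>
      by_cases hpσ : Sum.inl p ∈ ⋃₀ σ
      · obtain ⟨u, huσ, hpu⟩ := hpσ
        rcases ih u huσ with h1 | h1
        · left
          refine h1.subset ?_
          rintro z ⟨hzS, hz⟩
          exact ⟨hzS, fun hzu => hz ⟨u, huσ, hzu⟩⟩
        · exact absurd hpu h1
      · right
        exact hpσ
  have hclos : Sum.inl p ∈ closure (S \ {Sum.inl p}) := by
    rw [hSdiffl p, mem_closure_iff]
    intro U hU hpU
    rcases hopenfin U hU with h1 | h1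
    · obtain ⟨z, hzS, hz'⟩ := (hSinf.diff h1).nonempty
      refine ⟨z, ?_, hzS⟩
      by_contra h
      exact hz' ⟨hzS, h⟩
    · exact absurd hpU h1
  ext x
  simp only [Set.mem_singleton_iff]
  constructor
  · intro hx
    have hx' : x ∈ closure (S \ {x}) := hx
    obtain q | ee := x
    · by_contra hqp'
      have hqp : q ≠ p := fun h => hqp' (by rw [h])
      obtain ⟨oq, op, hoq, hop, hqoq, hpop, hdisj⟩ := t2_separation hqp
      have hBadfin := hfin op hop hpop
      have hpairs : ∀ e : Entourage T, ∃ pr : T × T,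
          e ∈ {e ∈ Nd | ¬ eSmall e opᶜ} →
            pr.1 ≠ q ∧ pr.2 ≠ q ∧ (pr.1, pr.2) ∉ e.carrier := by
        intro e
        by_cases he : e ∈ {e ∈ Nd | ¬ eSmall e opᶜ}
        · obtain ⟨x1, y1, h1, h2, h3⟩ := exists_pair_notin (hgood e (hNdA he.1)).1 q
          exact ⟨(x1, y1), fun _ => ⟨h1, h2, h3⟩⟩
        · exact ⟨(q, q), fun h => absurd h he⟩
      choose pr hpr using hpairs
      have hpr1 : ∀ e ∈ {e ∈ Nd | ¬ eSmall e opᶜ}, (pr e).1 ≠ q := fun e he => (hpr e he).1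
      have hpr2 : ∀ e ∈ {e ∈ Nd | ¬ eSmall e opᶜ}, (pr e).2 ≠ q := fun e he => (hpr e he).2.1
      have hpr3 : ∀ e ∈ {e ∈ Nd | ¬ eSmall e opᶜ}, ((pr e).1, (pr e).2) ∉ e.carrier :=
        fun e he => (hpr e he).2.2
      set o' : Set T :=
        oq ∩ ⋂ e ∈ {e ∈ Nd | ¬ eSmall e opᶜ}, ({(pr e).1, (pr e).2}ᶜ : Set T) with ho'def
      have ho' : IsOpen o' := by
        refine hoq.inter (hBadfin.isOpen_biInter fun e _ => ?_)
        exact ((Set.finite_singleton _).insert _).isClosed.isOpen_compl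
      have hqo' : q ∈ o' := by
        refine ⟨hqoq, ?_⟩
        rw [Set.mem_iInter₂]
        intro e he
        simp only [Set.mem_compl_iff, Set.mem_insert_iff, Set.mem_singleton_iff]
        push_neg
        exact ⟨fun h => hpr1 e he h.symm, fun h => hpr2 e he h.symm⟩
      set U : Set (T ⊕ ↥A) :=
        Sum.inl '' o' ∪ Sum.inr '' {e : ↥A | eSmall (↑e) o'ᶜ} with hUdef
      have hUopen : IsOpen U := by
        refine TopologicalSpace.isOpen_generateFrom_of_mem ?_
        exact Or.inr ⟨o', ho', rfl⟩
      have hqU : Sum.inl q ∈ U := Or.inl ⟨q, hqo', rfl⟩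
      obtain ⟨z, hzU, hzS⟩ := (mem_closure_iff.mp hx') U hUopen hqU
      rw [hSdiffl q] at hzS
      obtain ⟨e, rfl, heNd⟩ := hSnr z hzS
      have hsm : eSmall (↑e : Entourage T) o'ᶜ := by
        rcases hzU with ⟨x1, -, hx1⟩ | ⟨e', he', heq⟩
        · exact (Sum.inl_ne_inr hx1).elim
        · have he'e : e' = e := Sum.inr_injective heq
          exact he'e ▸ he'
      by_cases hb : (↑e : Entourage T) ∈ {e ∈ Nd | ¬ eSmall e opᶜ}
      · have hsubc : o' ⊆ ({(pr ↑e).1, (pr ↑e).2}ᶜ : Set T) := fun z' hz' =>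
          (Set.mem_iInter₂.mp hz'.2) (↑e) hb
        have h1 : (pr (↑e : Entourage T)).1 ∈ o'ᶜ := fun hmem =>
          (hsubc hmem) (Or.inl rfl)
        have h2 : (pr (↑e : Entourage T)).2 ∈ o'ᶜ := fun hmem =>
          (hsubc hmem) (Or.inr rfl)
        exact hpr3 (↑e) hb (hsm _ h1 _ h2)
      · have hsm2 : eSmall (↑e : Entourage T) opᶜ := by
          by_contra h
          exact hb ⟨heNd, h⟩
        have hsmq : eSmall (↑e : Entourage T) oqᶜ :=
          eSmall_mono hsm (Set.compl_subset_compl.mpr Set.inter_subset_left)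
        refine (hgood (↑e) (hNdA heNd)).1 ⟨opᶜ, oqᶜ, hsm2, hsmq, ?_⟩
        rw [← Set.compl_inter]
        rw [Set.inter_comm, Set.disjoint_iff_inter_eq_empty.mp hdisj, Set.compl_empty]
    · exfalso
      have hop : IsOpen {(Sum.inr ee : T ⊕ ↥A)} :=
        TopologicalSpace.isOpen_generateFrom_of_mem (Or.inl ⟨ee, rfl⟩)
      obtain ⟨z, hz1, -, hz3⟩ := (mem_closure_iff.mp hx') _ hop rfl
      exact hz3 hz1
  · rintro rfl
    exact hclos

end RHG
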